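/- Let 𝓑 be an unpackable directed family with U ∈ 𝓑. Then every constructible X ⊆ U has a unique swiss cheese decomposition: if S₁,…,S_r and T₁,…,T_s are both pairwise disjoint families of swiss cheeses with union X, no wheel of one cheese equal to a hole of another, then {S₁,…,S_r} = {T₁,…,T_s}. -/

import Mathlib

variable {U : Type*}

/-- A directed family: nonempty sets, any two nested or disjoint. -/
def DirFam (𝓑 : Set (Set U)) : Prop :=
  (∀ B ∈ 𝓑, B.Nonempty) ∧
    ∀ B₀ ∈ 𝓑, ∀ B₁ ∈ 𝓑, B₀ ⊆ B₁ ∨ B₁ ⊆ B₀ ∨ B₀ ∩ B₁ = ∅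

/-- Constructible sets: finite boolean combinations of balls. -/
inductive Constr (𝓑 : Set (Set U)) : Set U → Prop
  | ball {B : Set U} : B ∈ 𝓑 → Constr 𝓑 B
  | compl {X : Set U} : Constr 𝓑 X → Constr 𝓑 Xᶜ
  | union {X Y : Set U} : Constr 𝓑 X → Constr 𝓑 Y → Constr 𝓑 (X ∪ Y)

/-- A swiss cheese decomposition of X. -/
def IsSCD (𝓑 : Set (Set U)) (X : Set U) (n : ℕ) (A : Fin n → Set U)
    (H : Fin n → Set (Set U)) : Prop :=
  (∀ i, A i ∈ 𝓑) ∧ (∀ i, (H i).Finite) ∧ (∀ i, H i ⊆ 𝓑) ∧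
  (∀ i, ∀ B ∈ H i, B ⊂ A i) ∧
  (∀ i, ∀ B ∈ H i, ∀ C ∈ H i, B ≠ C → ¬B ⊆ C) ∧
  (∀ i j, i ≠ j → (A i \ ⋃₀ H i) ∩ (A j \ ⋃₀ H j) = ∅) ∧
  (∀ i j, A i ∉ H j) ∧
  (⋃ i, A i \ ⋃₀ H i) = X

/-- Unpackable: no ball is a finite union of proper sub-balls. -/
def Unpackable (𝓑 : Set (Set U)) : Prop :=
  ∀ A ∈ 𝓑, ∀ H : Set (Set U), H.Finite → H ⊆ 𝓑 → (∀ B ∈ H, B ⊂ A) → A ≠ ⋃₀ H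

section Aux

variable {𝓑 : Set (Set U)}

lemma nested_of_mem (h : DirFam 𝓑) {B C : Set U} (hB : B ∈ 𝓑) (hC : C ∈ 𝓑)
    {y : U} (hyB : y ∈ B) (hyC : y ∈ C) : B ⊆ C ∨ C ⊆ B := by
  rcases h.2 B hB C hC with h' | h' | h'
  · exact Or.inl h'
  · exact Or.inr h'
  · exact absurd (h' ▸ (Set.mem_inter hyB hyC)) (Set.notMem_empty y)

lemma cheese_nonempty (hunp : Unpackable 𝓑) {A : Set U} {G : Set (Set U)}
    (hA : A ∈ 𝓑) (hGf : G.Finite) (hG : G ⊆ 𝓑) (hGA : ∀ B ∈ G, B ⊂ A) :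
    (A \ ⋃₀ G).Nonempty := by
  have hsub : ⋃₀ G ⊆ A := Set.sUnion_subset fun B hB => (hGA B hB).1
  by_contra h'
  rw [Set.not_nonempty_iff_eq_empty, Set.diff_eq_empty] at h'
  exact hunp A hA G hGf hG hGA (le_antisymm h' hsub)

lemma no_same_wheel (hunp : Unpackable 𝓑) {m : ℕ} {X : Set U}
    {A' : Fin m → Set U} {H' : Fin m → Set (Set U)}
    (h₂ : IsSCD 𝓑 X m A' H') {j k : Fin m} (hjk : j ≠ k) (heq : A' j = A' k) : False := by
  obtain ⟨hA₂, hHf₂, hH𝓑₂, hHA₂, hinc₂, hdisj₂, hwh₂, hun₂⟩ := h₂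
  obtain ⟨w, hw1, hw2⟩ := cheese_nonempty hunp (hA₂ j) ((hHf₂ j).union (hHf₂ k))
    (Set.union_subset (hH𝓑₂ j) (hH𝓑₂ k))
    (by
      intro B hB
      rcases hB with hB | hB
      · exact hHA₂ j B hB
      · rw [heq]; exact hHA₂ k B hB)
  rw [Set.sUnion_union] at hw2
  have hmem : w ∈ (A' j \ ⋃₀ H' j) ∩ (A' k \ ⋃₀ H' k) :=
    ⟨⟨hw1, fun hh => hw2 (Set.mem_union_left _ hh)⟩,
     ⟨heq ▸ hw1, fun hh => hw2 (Set.mem_union_right _ hh)⟩⟩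
  exact Set.eq_empty_iff_forall_notMem.1 (hdisj₂ j k hjk) w hmem

/-- The key covering lemma: if `A i` is a maximal wheel (w.r.t. the second
decomposition's wheels), then the cheese `A i \ ⋃₀ H i` is contained in a cheese of
the second decomposition with the same wheel. -/
lemma cover (h : DirFam 𝓑) (hunp : Unpackable 𝓑) {X : Set U} {n m : ℕ}
    {A : Fin n → Set U} {H : Fin n → Set (Set U)}
    {A' : Fin m → Set U} {H' : Fin m → Set (Set U)}
    (h₁ : IsSCD 𝓑 X n A H) (h₂ : IsSCD 𝓑 X m A' H') (i : Fin n)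
    (hmax : ∀ j, A i ⊆ A' j → A i = A' j) :
    ∃ j, A' j = A i ∧ A i \ ⋃₀ H i ⊆ A' j \ ⋃₀ H' j := by
  have h₂' := h₂
  obtain ⟨hA₁, hHf₁, hH𝓑₁, hHA₁, hinc₁, hdisj₁, hwh₁, hun₁⟩ := h₁
  obtain ⟨hA₂, hHf₂, hH𝓑₂, hHA₂, hinc₂, hdisj₂, hwh₂, hun₂⟩ := h₂
  have hSX : A i \ ⋃₀ H i ⊆ X := by
    rw [← hun₁]; exact Set.subset_iUnion (fun k => A k \ ⋃₀ H k) i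
  have key : ∀ y ∈ A i \ ⋃₀ H i, ∃ j, y ∈ A' j \ ⋃₀ H' j ∧ A' j ⊆ A i := by
    intro y hy
    have hyX : y ∈ X := hSX hy
    rw [← hun₂] at hyX
    obtain ⟨j, hyj⟩ := Set.mem_iUnion.1 hyX
    rcases nested_of_mem h (hA₁ i) (hA₂ j) hy.1 hyj.1 with hs | hs
    · exact ⟨j, hyj, (hmax j hs).symm.subset⟩
    · exact ⟨j, hyj, hs⟩
  by_cases hex : ∃ j, A' j = A i ∧ ((A' j \ ⋃₀ H' j) ∩ (A i \ ⋃₀ H i)).Nonempty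
  · obtain ⟨j, hji, -⟩ := hex
    refine ⟨j, hji, ?_⟩
    intro y hy
    refine ⟨hji.symm ▸ hy.1, ?_⟩
    rintro ⟨C, hC, hyC⟩
    have hC𝓑 : C ∈ 𝓑 := hH𝓑₂ j hC
    have hCA : C ⊂ A i := hji ▸ hHA₂ j C hC
    -- C would be a union of proper sub-balls: contradiction with unpackability
    set K : Set (Set U) := {B ∈ H i | B ⊆ C} ∪ {B | (∃ k, B = A' k) ∧ B ⊂ C} with hK
    have hcover : C ⊆ ⋃₀ K := by
      intro z hzC
      have hzA : z ∈ A i := hCA.1 hzC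
      by_cases hzH : z ∈ ⋃₀ H i
      · obtain ⟨B, hB, hzB⟩ := hzH
        rcases nested_of_mem h (hH𝓑₁ i hB) hC𝓑 hzB hzC with hs | hs
        · exact ⟨B, Or.inl ⟨hB, hs⟩, hzB⟩
        · exact absurd ⟨B, hB, hs hyC⟩ hy.2
      · have hzX : z ∈ X := hSX ⟨hzA, hzH⟩
        rw [← hun₂] at hzX
        obtain ⟨k, hzk⟩ := Set.mem_iUnion.1 hzX
        have hkj : k ≠ j := by
          rintro rfl
          exact hzk.2 ⟨C, hC, hzC⟩
        have hA'kAi : A' k ⊆ A i := by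
          rcases nested_of_mem h (hA₂ k) (hA₁ i) hzk.1 hzA with hs | hs
          · exact hs
          · exact (hmax k hs).symm.subset
        have hA'kne : A' k ≠ A i := by
          rintro heq
          exact no_same_wheel hunp h₂' hkj.symm (by rw [hji, heq])
        rcases nested_of_mem h (hA₂ k) hC𝓑 hzk.1 hzC with hs | hs
        · -- A' k ⊆ C : z belongs to a proper sub-ball of C of the second kind
          have hne : A' k ≠ C := fun e => hwh₂ k j (e ▸ hC)
          exact ⟨A' k, Or.inr ⟨⟨k, rfl⟩, Set.ssubset_iff_subset_ne.mpr ⟨hs, hne⟩⟩, hzk.1⟩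
        · -- C ⊆ A' k : then A' k itself is a union of proper sub-balls, contradiction
          exfalso
          have hTk : ∀ w ∈ A' k \ ⋃₀ H' k, w ∈ ⋃₀ H' j := by
            intro w hw
            have hwAj : w ∈ A' j := hji.symm ▸ hA'kAi hw.1
            by_contra hwH
            exact Set.eq_empty_iff_forall_notMem.1 (hdisj₂ j k hkj.symm) w
              ⟨⟨hwAj, hwH⟩, hw⟩
          refine hunp (A' k) (hA₂ k) (H' k ∪ {D ∈ H' j | D ⊆ A' k})
            ((hHf₂ k).union ((hHf₂ j).subset (Set.sep_subset _ _)))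
            (Set.union_subset (hH𝓑₂ k) (fun D hD => hH𝓑₂ j hD.1)) ?_ ?_
          · intro B hB
            rcases hB with hB | ⟨hBj, hBk⟩
            · exact hHA₂ k B hB
            · exact Set.ssubset_iff_subset_ne.mpr ⟨hBk, fun e => hwh₂ k j (e ▸ hBj)⟩
          · refine subset_antisymm ?_ (Set.sUnion_subset ?_)
            · intro w hwk
              by_cases hwH : w ∈ ⋃₀ H' k
              · obtain ⟨B, hB, hwB⟩ := hwH
                exact ⟨B, Or.inl hB, hwB⟩
              · obtain ⟨D, hD, hwD⟩ := hTk w ⟨hwk, hwH⟩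
                have hDk : D ⊆ A' k := by
                  rcases nested_of_mem h (hH𝓑₂ j hD) (hA₂ k) hwD hwk with hs' | hs'
                  · exact hs'
                  · -- A' k ⊆ D : contradiction with incomparability of holes
                    exfalso
                    by_cases hCD : C = D
                    · exact hwh₂ k j ((subset_antisymm hs' (hCD ▸ hs)).symm ▸ hD)
                    · exact hinc₂ j C hC D hD hCD (hs.trans hs')
                exact ⟨D, Or.inr ⟨hD, hDk⟩, hwD⟩
            · intro B hB
              rcases hB with hB | ⟨hBj, hBk⟩
              · exact (hHA₂ k B hB).1
              · exact hBk
    -- now conclude: C is a union of proper sub-balls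
    refine hunp C hC𝓑 K
      (((hHf₁ i).subset (Set.sep_subset _ _)).union
        ((Set.finite_range A').subset (by rintro B ⟨⟨k, rfl⟩, -⟩; exact ⟨k, rfl⟩)))
      (Set.union_subset (fun B hB => hH𝓑₁ i hB.1)
        (by rintro B ⟨⟨k, rfl⟩, -⟩; exact hA₂ k)) ?_
      (subset_antisymm hcover (Set.sUnion_subset ?_))
    · intro B hB
      rcases hB with ⟨hBH, hBC⟩ | ⟨-, hBC⟩
      · exact Set.ssubset_iff_subset_ne.mpr ⟨hBC, fun e => hy.2 ⟨B, hBH, by rw [e]; exact hyC⟩⟩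
      · exact hBC
    · intro B hB
      rcases hB with ⟨-, hBC⟩ | ⟨-, hBC⟩
      · exact hBC
      · exact hBC.1
  · -- otherwise A i would be a union of proper sub-balls
    exfalso
    refine hunp (A i) (hA₁ i) (H i ∪ {B | (∃ j, B = A' j) ∧ B ⊂ A i})
      ((hHf₁ i).union ((Set.finite_range A').subset (by rintro B ⟨⟨j, rfl⟩, -⟩; exact ⟨j, rfl⟩)))
      (Set.union_subset (hH𝓑₁ i) (by rintro B ⟨⟨j, rfl⟩, -⟩; exact hA₂ j)) ?_ ?_
    · intro B hB
      rcases hB with hB | ⟨-, hBA⟩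
      · exact hHA₁ i B hB
      · exact hBA
    · refine subset_antisymm ?_ (Set.sUnion_subset ?_)
      · intro y hyA
        by_cases hyH : y ∈ ⋃₀ H i
        · obtain ⟨B, hB, hyB⟩ := hyH
          exact ⟨B, Or.inl hB, hyB⟩
        · obtain ⟨j, hyj, hsub⟩ := key y ⟨hyA, hyH⟩
          have hne : A' j ≠ A i := fun e => hex ⟨j, e, ⟨y, hyj, hyA, hyH⟩⟩
          exact ⟨A' j, Or.inr ⟨⟨j, rfl⟩, Set.ssubset_iff_subset_ne.mpr ⟨hsub, hne⟩⟩, hyj.1⟩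
      · intro B hB
        rcases hB with hB | ⟨-, hBA⟩
        · exact (hHA₁ i B hB).1
        · exact hBA.1

/-- If `A i` is a maximal wheel overall, its cheese equals some cheese of the other
decomposition. -/
lemma matching (h : DirFam 𝓑) (hunp : Unpackable 𝓑) {X : Set U} {n m : ℕ}
    {A : Fin n → Set U} {H : Fin n → Set (Set U)}
    {A' : Fin m → Set U} {H' : Fin m → Set (Set U)}
    (h₁ : IsSCD 𝓑 X n A H) (h₂ : IsSCD 𝓑 X m A' H') (i : Fin n)
    (hmax1 : ∀ k, A i ⊆ A k → A i = A k)
    (hmax2 : ∀ j, A i ⊆ A' j → A i = A' j) :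
    ∃ j, A i \ ⋃₀ H i = A' j \ ⋃₀ H' j := by
  obtain ⟨j, hji, hsub⟩ := cover h hunp h₁ h₂ i hmax2
  obtain ⟨i', hi', hsub'⟩ := cover h hunp h₂ h₁ j
    (fun k hk => by rw [hji] at hk ⊢; exact hmax1 k hk)
  obtain ⟨x, hx⟩ := cheese_nonempty hunp (h₁.1 i) (h₁.2.1 i) (h₁.2.2.1 i) (h₁.2.2.2.1 i)
  have hii' : i = i' := by
    by_contra hne
    exact Set.eq_empty_iff_forall_notMem.1 (h₁.2.2.2.2.2.1 i i' hne) x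
      ⟨hx, hsub' (hsub hx)⟩
  exact ⟨j, subset_antisymm hsub (hii' ▸ hsub')⟩

lemma restrict {X : Set U} {n : ℕ} {A : Fin (n + 1) → Set U} {H : Fin (n + 1) → Set (Set U)}
    (h₁ : IsSCD 𝓑 X (n + 1) A H) (i : Fin (n + 1)) :
    IsSCD 𝓑 (X \ (A i \ ⋃₀ H i)) n (A ∘ i.succAbove) (H ∘ i.succAbove) := by
  obtain ⟨c1, c2, c3, c4, c5, c6, c7, c8⟩ := h₁
  refine ⟨fun k => c1 _, fun k => c2 _, fun k => c3 _, fun k => c4 _, fun k => c5 _,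
    ?_, fun k l => c7 _ _, ?_⟩
  · intro k l hkl
    exact c6 _ _ fun e => hkl (Fin.succAbove_right_injective e)
  · ext y
    simp only [Set.mem_iUnion, Function.comp_apply, Set.mem_diff]
    constructor
    · rintro ⟨k, hy⟩
      refine ⟨c8 ▸ Set.mem_iUnion.2 ⟨i.succAbove k, hy⟩, fun hyi => ?_⟩
      exact Set.eq_empty_iff_forall_notMem.1 (c6 (i.succAbove k) i (Fin.succAbove_ne i k)) y
        ⟨hy, hyi⟩
    · rintro ⟨hyX, hySi⟩
      obtain ⟨k₀, hk₀⟩ := Set.mem_iUnion.1 (c8.symm ▸ hyX)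
      have hk₀i : k₀ ≠ i := by rintro rfl; exact hySi hk₀
      obtain ⟨k, rfl⟩ := Fin.exists_succAbove_eq hk₀i
      exact ⟨k, hk₀⟩

lemma range_eq_insert {α : Type*} {n : ℕ} (f : Fin (n + 1) → α) (i : Fin (n + 1)) :
    Set.range f = insert (f i) (Set.range (f ∘ i.succAbove)) := by
  ext x
  simp only [Set.mem_range, Set.mem_insert_iff, Function.comp_apply]
  constructor
  · rintro ⟨k, rfl⟩
    by_cases hk : k = i
    · exact Or.inl (by rw [hk])
    · obtain ⟨l, rfl⟩ := Fin.exists_succAbove_eq hk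
      exact Or.inr ⟨l, rfl⟩
  · rintro (rfl | ⟨l, rfl⟩)
    · exact ⟨i, rfl⟩
    · exact ⟨i.succAbove l, rfl⟩

lemma finish_step (h : DirFam 𝓑) (hunp : Unpackable 𝓑) {X : Set U} {n m : ℕ}
    {A : Fin (n + 1) → Set U} {H : Fin (n + 1) → Set (Set U)}
    {A' : Fin m → Set U} {H' : Fin m → Set (Set U)}
    (h₁ : IsSCD 𝓑 X (n + 1) A H) (h₂ : IsSCD 𝓑 X m A' H')
    (i : Fin (n + 1)) (j : Fin m)
    (hij : A i \ ⋃₀ H i = A' j \ ⋃₀ H' j)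
    (ih : ∀ (m' : ℕ) (X : Set U) (A : Fin n → Set U) (H : Fin n → Set (Set U))
      (A' : Fin m' → Set U) (H' : Fin m' → Set (Set U)),
      IsSCD 𝓑 X n A H → IsSCD 𝓑 X m' A' H' →
      Set.range (fun k => A k \ ⋃₀ H k) = Set.range (fun l => A' l \ ⋃₀ H' l)) :
    Set.range (fun k => A k \ ⋃₀ H k) = Set.range (fun l => A' l \ ⋃₀ H' l) := by
  have hm : 0 < m := j.pos
  obtain ⟨m', rfl⟩ : ∃ m', m = m' + 1 := ⟨m - 1, by omega⟩
  have r₁ := restrict h₁ i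
  have r₂ := restrict h₂ j
  rw [← hij] at r₂
  have hr := ih m' (X \ (A i \ ⋃₀ H i)) (A ∘ i.succAbove) (H ∘ i.succAbove)
    (A' ∘ j.succAbove) (H' ∘ j.succAbove) r₁ r₂
  rw [range_eq_insert (fun k => A k \ ⋃₀ H k) i,
    range_eq_insert (fun l => A' l \ ⋃₀ H' l) j]
  have e₁ : (fun k => A k \ ⋃₀ H k) ∘ i.succAbove
      = fun k => (A ∘ i.succAbove) k \ ⋃₀ (H ∘ i.succAbove) k := rfl
  have e₂ : (fun l => A' l \ ⋃₀ H' l) ∘ j.succAbove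
      = fun l => (A' ∘ j.succAbove) l \ ⋃₀ (H' ∘ j.succAbove) l := rfl
  rw [e₁, e₂, hr, hij]

lemma main_aux (h : DirFam 𝓑) (hunp : Unpackable 𝓑) : ∀ (n m : ℕ) (X : Set U)
    (A : Fin n → Set U) (H : Fin n → Set (Set U))
    (A' : Fin m → Set U) (H' : Fin m → Set (Set U)),
    IsSCD 𝓑 X n A H → IsSCD 𝓑 X m A' H' →
    Set.range (fun i => A i \ ⋃₀ H i) = Set.range (fun j => A' j \ ⋃₀ H' j) := by
  intro n
  induction n with
  | zero =>
    intro m X A H A' H' h₁ h₂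
    have hX : X = ∅ := by
      rw [← h₁.2.2.2.2.2.2.2]
      simp
    have hm : ∀ j : Fin m, False := by
      intro j
      obtain ⟨x, hx⟩ := cheese_nonempty hunp (h₂.1 j) (h₂.2.1 j) (h₂.2.2.1 j)
        (h₂.2.2.2.1 j)
      have hxX : x ∈ X := by
        rw [← h₂.2.2.2.2.2.2.2]
        exact Set.mem_iUnion.2 ⟨j, hx⟩
      rw [hX] at hxX
      exact hxX
    have : IsEmpty (Fin m) := ⟨hm⟩
    rw [Set.range_eq_empty, Set.range_eq_empty]
  | succ n ih =>
    intro m X A H A' H' h₁ h₂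
    -- pick a maximal wheel among all wheels
    have hWfin : (Set.range A ∪ Set.range A').Finite :=
      (Set.finite_range A).union (Set.finite_range A')
    obtain ⟨B, hBW, hBmax⟩ : ∃ B ∈ (Set.range A ∪ Set.range A'),
        ∀ a' ∈ (Set.range A ∪ Set.range A'), id B ≤ id a' → id B = id a' := by
      obtain ⟨B, hB⟩ := hWfin.exists_maximal ⟨A 0, Or.inl ⟨0, rfl⟩⟩
      exact ⟨B, hB.1, fun a' ha' hle => le_antisymm hle (hB.2 ha' hle)⟩
    simp only [id] at hBmax
    rcases hBW with ⟨i, rfl⟩ | ⟨j, rfl⟩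
    · have hmax1 : ∀ k, A i ⊆ A k → A i = A k :=
        fun k hk => hBmax (A k) (Or.inl ⟨k, rfl⟩) hk
      have hmax2 : ∀ j, A i ⊆ A' j → A i = A' j :=
        fun j hj => hBmax (A' j) (Or.inr ⟨j, rfl⟩) hj
      obtain ⟨j, hij⟩ := matching h hunp h₁ h₂ i hmax1 hmax2
      exact finish_step h hunp h₁ h₂ i j hij ih
    · have hmax1 : ∀ k, A' j ⊆ A' k → A' j = A' k :=
        fun k hk => hBmax (A' k) (Or.inr ⟨k, rfl⟩) hk
      have hmax2 : ∀ k, A' j ⊆ A k → A' j = A k :=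
        fun k hk => hBmax (A k) (Or.inl ⟨k, rfl⟩) hk
      obtain ⟨i, hji⟩ := matching h hunp h₂ h₁ j hmax1 hmax2
      exact finish_step h hunp h₁ h₂ i j hji.symm ih

end Aux

/-- In an unpackable directed family, swiss cheese decompositions are unique: the two
collections of swiss cheeses coincide. -/
theorem stmt9 (𝓑 : Set (Set U)) (h : DirFam 𝓑) (hU : (Set.univ : Set U) ∈ 𝓑)
    (hunp : Unpackable 𝓑) (X : Set U) (hX : Constr 𝓑 X)
    (n m : ℕ) (A : Fin n → Set U) (H : Fin n → Set (Set U))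
    (A' : Fin m → Set U) (H' : Fin m → Set (Set U))
    (h₁ : IsSCD 𝓑 X n A H) (h₂ : IsSCD 𝓑 X m A' H') :
    Set.range (fun i => A i \ ⋃₀ H i) = Set.range (fun j => A' j \ ⋃₀ H' j) := by
  exact main_aux h hunp n m X A H A' H' h₁ h₂
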